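/- Let G be a cubic graph, C a dominating cycle in G, and M = G \ E(C) the associated perfect pseudo-matching. Suppose the contracted graph G/M admits a cycle decomposition S compatible with the transition system T corresponding to C. Then G has a cycle double cover containing C; namely, lifting the cycles of S back to G yields a set S_3 of cycles in G covering every edge of M twice and every edge of C once, so S_3 ∪ {C} is a cycle double cover of G. -/

import Mathlib

open SimpleGraph Classical

/-- The claw `K_{1,3}`: vertex `0` is the center, adjacent to `1,2,3`. -/
def clawGraph : SimpleGraph (Fin 4) :=
  SimpleGraph.fromEdgeSet {s((0:Fin 4),1), s((0:Fin 4),2), s((0:Fin 4),3)}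

/-- A graph is cubic if every vertex has exactly 3 neighbours. -/
def IsCubic {V : Type*} (G : SimpleGraph V) : Prop :=
  ∀ v : V, (G.neighborSet v).ncard = 3

/-- `M` is a perfect pseudo-matching of `G`: a spanning subgraph each of whose
connected components is isomorphic to `K₂` or to the claw `K_{1,3}`. -/
def IsPerfectPseudoMatching {V : Type*} (G M : SimpleGraph V) : Prop :=
  M ≤ G ∧ ∀ c : M.ConnectedComponent,
    Nonempty ((M.induce c.supp) ≃g (⊤ : SimpleGraph (Fin 2))) ∨
    Nonempty ((M.induce c.supp) ≃g clawGraph)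

/-- `C` is a cycle, given as a subgraph of `G`: nonempty edge set, every vertex of
degree `0` or `2`, and connected on its support. -/
def IsCycleSubgraph {V : Type*} (G C : SimpleGraph V) : Prop :=
  C ≤ G ∧ C.edgeSet.Nonempty ∧
  (∀ v : V, (C.neighborSet v).ncard = 0 ∨ (C.neighborSet v).ncard = 2) ∧
  (∀ u v : V, u ∈ C.support → v ∈ C.support → C.Reachable u v)

/-- A dominating cycle: every edge of `G` has an endpoint on `C`. -/
def IsDominatingCycle {V : Type*} (G C : SimpleGraph V) : Prop :=
  IsCycleSubgraph G C ∧ ∀ u v : V, G.Adj u v → u ∈ C.support ∨ v ∈ C.support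

/-- `C` is a connected component of `D` which is a cycle. -/
def IsComponentCycleOf {V : Type*} (D C : SimpleGraph V) : Prop :=
  IsCycleSubgraph D C ∧ ∀ u v : V, u ∈ C.support → D.Adj u v → C.Adj u v

/-- A proper 3-edge-colouring of `G`. -/
def IsProper3EdgeColoring {V : Type*} (G : SimpleGraph V) (c : Sym2 V → Fin 3) : Prop :=
  ∀ e ∈ G.edgeSet, ∀ f ∈ G.edgeSet, e ≠ f → (∃ v : V, v ∈ e ∧ v ∈ f) → c e ≠ c f

def Proper3EdgeColorable {V : Type*} (G : SimpleGraph V) : Prop :=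
  ∃ c : Sym2 V → Fin 3, IsProper3EdgeColoring G c

/-- A cycle double cover of `G` containing, among its members, specified cycles. -/
def IsCycleDoubleCover {V : Type*} (G : SimpleGraph V) {n : ℕ}
    (F : Fin n → SimpleGraph V) : Prop :=
  (∀ i, IsCycleSubgraph G (F i)) ∧
  ∀ e ∈ G.edgeSet, {i : Fin n | e ∈ (F i).edgeSet}.ncard = 2

/-- A cycle in the contracted multigraph `G/M`: a cyclic sequence of pairwise distinct
edges of `G \ E(M)` joining pairwise distinct components of `M`. -/
structure ContractedCycle {V : Type*} (G M : SimpleGraph V) where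
  n : ℕ
  hn : 0 < n
  edge : Fin n → Sym2 V
  vtx : Fin n → M.ConnectedComponent
  mem : ∀ i, edge i ∈ G.edgeSet \ M.edgeSet
  edge_inj : Function.Injective edge
  vtx_inj : Function.Injective vtx
  ends : ∀ i : Fin n, ∃ x y : V, edge i = s(x, y) ∧
    M.connectedComponentMk x = vtx i ∧
    M.connectedComponentMk y = vtx (i + ⟨1 % n, Nat.mod_lt _ hn⟩)

/-- The edge set of a contracted cycle. -/
def ContractedCycle.edges {V : Type*} {G M : SimpleGraph V} (c : ContractedCycle G M) :
    Set (Sym2 V) := Set.range c.edge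

/-- A decomposition of the contracted multigraph `G/M` into cycles, compatible with the
transition system `T_M` induced by the cycles of `G \ E(M)` (i.e. no cycle of the
decomposition contains two distinct edges sharing a vertex of `G`). -/
def IsCompatibleCycleDecomposition {V : Type*} (G M : SimpleGraph V)
    (D : Set (ContractedCycle G M)) : Prop :=
  (∀ e ∈ G.edgeSet \ M.edgeSet, ∃ c ∈ D, e ∈ c.edges) ∧
  (∀ c ∈ D, ∀ c' ∈ D, c ≠ c' → Disjoint c.edges c'.edges) ∧
  (∀ c ∈ D, ∀ e ∈ c.edges, ∀ f ∈ c.edges, e ≠ f → ¬ ∃ v : V, v ∈ e ∧ v ∈ f)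

/-- The intersection graph of a family of cycles of `G/M`: two distinct cycles are
adjacent iff they meet in a vertex of `G/M`. -/
def intersectionGraph {V : Type*} (G M : SimpleGraph V) (D : Set (ContractedCycle G M)) :
    SimpleGraph D where
  Adj a b := a ≠ b ∧ ∃ w : M.ConnectedComponent,
    w ∈ Set.range a.1.vtx ∧ w ∈ Set.range b.1.vtx
  symm := ⟨by
    rintro a b ⟨hne, w, h1, h2⟩
    exact ⟨hne.symm, w, h2, h1⟩⟩
  loopless := ⟨by
    rintro a ⟨hne, -⟩
    exact hne rfl⟩

/-- `H` is a minor of `G` (branch-set definition). -/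
def IsMinorOf {α β : Type*} (H : SimpleGraph α) (G : SimpleGraph β) : Prop :=
  ∃ f : α → Set β, (∀ a, (f a).Nonempty) ∧ (∀ a, (G.induce (f a)).Connected) ∧
    (Pairwise (Function.onFun Disjoint f)) ∧
    ∀ a b, H.Adj a b → ∃ x ∈ f a, ∃ y ∈ f b, G.Adj x y

/-- Planarity, via Wagner's theorem: no `K₅` and no `K_{3,3}` minor. -/
def IsPlanar {β : Type*} (G : SimpleGraph β) : Prop :=
  ¬ IsMinorOf (⊤ : SimpleGraph (Fin 5)) G ∧
  ¬ IsMinorOf (completeBipartiteGraph (Fin 3) (Fin 3)) G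

/-- The simple graph underlying the contraction `G/M`. -/
def contractedSimple {V : Type*} (G M : SimpleGraph V) : SimpleGraph M.ConnectedComponent where
  Adj c d := c ≠ d ∧ ∃ x y : V, G.Adj x y ∧ ¬ M.Adj x y ∧
    M.connectedComponentMk x = c ∧ M.connectedComponentMk y = d
  symm := ⟨by
    rintro c d ⟨hne, x, y, h1, h2, h3, h4⟩
    exact ⟨hne.symm, y, x, h1.symm, fun h => h2 h.symm, h4, h3⟩⟩
  loopless := ⟨by
    rintro c ⟨hne, -⟩
    exact hne rfl⟩

/-- Number of endpoints (with multiplicity) of the edge `e` lying in the part `c`. -/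
noncomputable def endCount {V α : Type*} (e : Sym2 V) (g : V → α) (c : α) : ℕ :=
  Sym2.lift ⟨fun x y => (if g x = c then 1 else 0) + (if g y = c then 1 else 0),
    fun x y => by dsimp; omega⟩ e

/-- The degree of a component `c` of `M` in the contracted multigraph `G/M`. -/
noncomputable def contractedDegree {V : Type*} (G M : SimpleGraph V)
    (c : M.ConnectedComponent) : ℕ :=
  ∑ᶠ e ∈ (G.edgeSet \ M.edgeSet), endCount e (M.connectedComponentMk) c

namespace CDC
set_option linter.unusedSectionVars false
variable {V : Type*} [Fintype V] {G C : SimpleGraph V}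

lemma cle (hC : IsDominatingCycle G C) : C ≤ G := hC.1.1

lemma nbhd_sdiff (G C : SimpleGraph V) (v : V) :
    (G \ C).neighborSet v = G.neighborSet v \ C.neighborSet v := by
  ext w; simp [mem_neighborSet, sdiff_adj]

lemma cdeg_two (hC : IsDominatingCycle G C) {v : V} (hv : v ∈ C.support) :
    (C.neighborSet v).ncard = 2 := by
  rcases hC.1.2.2.1 v with h | h
  · exfalso
    obtain ⟨w, hw⟩ := hv
    have hpos : 0 < (C.neighborSet v).ncard :=
      (Set.ncard_pos (Set.toFinite _)).mpr ⟨w, hw⟩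
    omega
  · exact h

lemma mdeg_one (hG : IsCubic G) (hC : IsDominatingCycle G C) {v : V} (hv : v ∈ C.support) :
    ((G \ C).neighborSet v).ncard = 1 := by
  have hsub : C.neighborSet v ⊆ G.neighborSet v := fun w hw => (cle hC) hw
  rw [nbhd_sdiff, Set.ncard_diff hsub (Set.toFinite _), hG v, cdeg_two hC hv]

lemma mdeg_three (hG : IsCubic G) {v : V} (hv : v ∉ C.support) :
    ((G \ C).neighborSet v).ncard = 3 := by
  have h : C.neighborSet v = ∅ := by
    ext w; simp only [mem_neighborSet, Set.mem_empty_iff_false, iff_false]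
    exact fun h => hv ⟨w, h⟩
  rw [nbhd_sdiff, h, Set.diff_empty]; exact hG v

lemma mdeg (hG : IsCubic G) (hC : IsDominatingCycle G C) (v : V) :
    ((G \ C).neighborSet v).ncard = 1 ∨ ((G \ C).neighborSet v).ncard = 3 := by
  by_cases hv : v ∈ C.support
  · exact Or.inl (mdeg_one hG hC hv)
  · exact Or.inr (mdeg_three hG hv)

lemma support_of_mdeg_one (hG : IsCubic G) {v : V}
    (h : ((G \ C).neighborSet v).ncard = 1) : v ∈ C.support := by
  by_contra h'
  have := mdeg_three (C := C) hG h'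
  omega

lemma ncard_ne_one_of_two {M : SimpleGraph V} {x a b : V} (ha : M.Adj x a) (hb : M.Adj x b)
    (hab : a ≠ b) : (M.neighborSet x).ncard ≠ 1 := by
  intro h
  obtain ⟨z, hz⟩ := Set.ncard_eq_one.mp h
  have h1 : a ∈ M.neighborSet x := ha
  have h2 : b ∈ M.neighborSet x := hb
  rw [hz, Set.mem_singleton_iff] at h1 h2
  exact hab (h1.trans h2.symm)

lemma eq_nbr_of_mdeg_one {M : SimpleGraph V} {x a b : V}
    (h : (M.neighborSet x).ncard = 1) (ha : M.Adj x a) (hb : M.Adj x b) : a = b := by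
  by_contra hab
  exact ncard_ne_one_of_two ha hb hab h

lemma mdeg_nbr (hG : IsCubic G) (hC : IsDominatingCycle G C) {v u : V}
    (h : (G \ C).Adj v u) (h3 : ((G \ C).neighborSet v).ncard = 3) :
    ((G \ C).neighborSet u).ncard = 1 := by
  have hv : v ∉ C.support := by
    intro hv
    have := mdeg_one hG hC hv
    omega
  have hGadj : G.Adj v u := h.1
  rcases hC.2 v u hGadj with h' | h'
  · exact absurd h' hv
  · exact mdeg_one hG hC h'

lemma reach_struct (hG : IsCubic G) (hC : IsDominatingCycle G C) {u v : V}
    (h : (G \ C).Reachable u v) :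
    u = v ∨ (G \ C).Adj u v ∨ ∃ z, (G \ C).Adj u z ∧ (G \ C).Adj z v := by
  obtain ⟨w⟩ := h
  induction w with
  | nil => exact Or.inl rfl
  | @cons u x v h p ih =>
    rcases ih with rfl | h' | ⟨z, h1, h2⟩
    · exact Or.inr (Or.inl h)
    · by_cases huv : u = v
      · exact Or.inl huv
      · exact Or.inr (Or.inr ⟨x, h, h'⟩)
    · by_cases huz : u = z
      · subst huz; exact Or.inr (Or.inl h2)
      · -- x adjacent to u and z, distinct
        have hx3 : ((G \ C).neighborSet x).ncard = 3 := by
          rcases mdeg hG hC x with h1' | h1'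
          · exact absurd h1' (ncard_ne_one_of_two h.symm h1 huz)
          · exact h1'
        have hz1 : ((G \ C).neighborSet z).ncard = 1 := mdeg_nbr hG hC h1 hx3
        have hxv : x = v := eq_nbr_of_mdeg_one hz1 h1.symm h2
        subst hxv
        exact Or.inr (Or.inl h)

set_option linter.unusedSectionVars false
variable {V : Type*}

def one {G M : SimpleGraph V} (c : ContractedCycle G M) : Fin c.n :=
  ⟨1 % c.n, Nat.mod_lt _ c.hn⟩

def nxt {G M : SimpleGraph V} (c : ContractedCycle G M) (i : Fin c.n) : Fin c.n :=
  i + one c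

noncomputable def Xf {G M : SimpleGraph V} (c : ContractedCycle G M) (i : Fin c.n) : V :=
  (c.ends i).choose

noncomputable def Yf {G M : SimpleGraph V} (c : ContractedCycle G M) (i : Fin c.n) : V :=
  (c.ends i).choose_spec.choose

lemma Xf_spec {G M : SimpleGraph V} (c : ContractedCycle G M) (i : Fin c.n) :
    c.edge i = s(Xf c i, Yf c i) ∧ M.connectedComponentMk (Xf c i) = c.vtx i ∧
      M.connectedComponentMk (Yf c i) = c.vtx (nxt c i) :=
  (c.ends i).choose_spec.choose_spec

lemma edge_mem_edges {G M : SimpleGraph V} (c : ContractedCycle G M) (i : Fin c.n) :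
    c.edge i ∈ c.edges := ⟨i, rfl⟩

def used {G M : SimpleGraph V} (c : ContractedCycle G M) (v : V) : Prop :=
  ∃ e ∈ c.edges, v ∈ e

def touched {G M : SimpleGraph V} (c : ContractedCycle G M) (v : V) : Prop :=
  used c v ∨ ((M.neighborSet v).ncard = 3 ∧ M.connectedComponentMk v ∈ Set.range c.vtx)

def lift {V : Type*} {G M : SimpleGraph V} (c : ContractedCycle G M) : SimpleGraph V where
  Adj x y := s(x, y) ∈ c.edges ∨ (M.Adj x y ∧ touched c x ∧ touched c y)
  symm := ⟨by
    rintro x y (h | ⟨h1, h2, h3⟩)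
    · left; rwa [Sym2.eq_swap]
    · exact Or.inr ⟨h1.symm, h3, h2⟩⟩
  loopless := ⟨by
    rintro x (h | ⟨h1, -⟩)
    · obtain ⟨i, hi⟩ := h
      have h2 := (c.mem i).1
      rw [hi] at h2
      exact G.loopless.irrefl x (G.mem_edgeSet.mp h2)
    · exact M.loopless.irrefl x h1⟩

lemma used_iff {G M : SimpleGraph V} {c : ContractedCycle G M} {v : V} :
    used c v ↔ ∃ i, v = Xf c i ∨ v = Yf c i := by
  constructor
  · rintro ⟨e, ⟨i, rfl⟩, hv⟩
    refine ⟨i, ?_⟩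
    rw [(Xf_spec c i).1, Sym2.mem_iff] at hv
    exact hv
  · rintro ⟨i, h⟩
    refine ⟨c.edge i, edge_mem_edges c i, ?_⟩
    rw [(Xf_spec c i).1, Sym2.mem_iff]
    exact h

lemma comp_mem_range_of_used {G M : SimpleGraph V} {c : ContractedCycle G M} {v : V}
    (h : used c v) : M.connectedComponentMk v ∈ Set.range c.vtx := by
  obtain ⟨i, h | h⟩ := used_iff.mp h <;> subst h
  · exact ⟨i, ((Xf_spec c i).2.1).symm⟩
  · exact ⟨nxt c i, ((Xf_spec c i).2.2).symm⟩

lemma Xf_ne_Yf {G M : SimpleGraph V} (c : ContractedCycle G M) (i : Fin c.n) :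
    Xf c i ≠ Yf c i := by
  intro h
  have h2 := (c.mem i).1
  rw [(Xf_spec c i).1, h] at h2
  exact G.loopless.irrefl _ (G.mem_edgeSet.mp h2)

lemma usedTwo {G M : SimpleGraph V} {c : ContractedCycle G M}
    (hcompat : ∀ e ∈ c.edges, ∀ f ∈ c.edges, e ≠ f → ¬ ∃ v : V, v ∈ e ∧ v ∈ f)
    (j : Fin c.n) :
    ∃ u v : V, u ≠ v ∧ M.connectedComponentMk u = c.vtx j ∧
      M.connectedComponentMk v = c.vtx j ∧ used c u ∧ used c v ∧
      ∀ w, used c w → M.connectedComponentMk w = c.vtx j → w = u ∨ w = v := by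
  haveI : NeZero c.n := ⟨c.hn.ne'⟩
  set p := j - one c with hp
  have hpj : nxt c p = j := by rw [nxt, hp, sub_add_cancel]
  refine ⟨Yf c p, Xf c j, ?_, ?_, (Xf_spec c j).2.1, used_iff.mpr ⟨p, Or.inr rfl⟩,
    used_iff.mpr ⟨j, Or.inl rfl⟩, ?_⟩
  · by_cases hn1 : c.n = 1
    · have hpj' : p = j := by
        apply Fin.ext
        have h1 := p.isLt
        have h2 := j.isLt
        omega
      rw [hpj']
      exact (Xf_ne_Yf c j).symm
    · have hn2 : 2 ≤ c.n := by have := c.hn; omega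
      have hone : one c ≠ 0 := by
        have h1 : (one c).val = 1 := Nat.mod_eq_of_lt hn2
        intro h
        rw [h, Fin.val_zero] at h1
        omega
      have hpne : p ≠ j := by
        rw [hp]
        intro h
        exact hone (by rwa [sub_eq_self] at h)
      have hedge : c.edge p ≠ c.edge j := fun h => hpne (c.edge_inj h)
      intro h
      refine hcompat _ (edge_mem_edges c p) _ (edge_mem_edges c j) hedge ⟨Yf c p, ?_, ?_⟩
      · rw [(Xf_spec c p).1, Sym2.mem_iff]; exact Or.inr rfl
      · rw [(Xf_spec c j).1, Sym2.mem_iff]; exact Or.inl h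
  · rw [← hpj]; exact (Xf_spec c p).2.2
  · intro w hw hcw
    obtain ⟨i, h | h⟩ := used_iff.mp hw <;> subst h
    · right
      have : c.vtx i = c.vtx j := by rw [← (Xf_spec c i).2.1, hcw]
      rw [c.vtx_inj this]
    · left
      have : c.vtx (nxt c i) = c.vtx j := by rw [← (Xf_spec c i).2.2, hcw]
      have hij : nxt c i = j := c.vtx_inj this
      have : i = p := by
        rw [hp, ← hij, nxt, add_sub_cancel_right]
      rw [this]


section Main
variable {V : Type*} [Fintype V] {G C : SimpleGraph V}
  {D : Set (ContractedCycle G (G \ C))} {c : ContractedCycle G (G \ C)}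

lemma edges_subset_C (hC : IsDominatingCycle G C) (c : ContractedCycle G (G \ C)) :
    c.edges ⊆ C.edgeSet := by
  rintro e ⟨i, rfl⟩
  have h := c.mem i
  rw [edgeSet_sdiff] at h
  simp only [Set.mem_diff] at h
  by_contra he
  exact h.2 ⟨h.1, he⟩

lemma mem_support_of_used (hC : IsDominatingCycle G C) {v : V} (h : used c v) :
    v ∈ C.support := by
  obtain ⟨e, he, hv⟩ := h
  have heC := edges_subset_C hC c he
  have hs := Sym2.other_spec hv
  rw [← hs] at heC
  exact ⟨Sym2.Mem.other hv, C.mem_edgeSet.mp heC⟩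

lemma used_unique (hD : IsCompatibleCycleDecomposition G (G \ C) D) (hc : c ∈ D)
    {v : V} {e f : Sym2 V} (he : e ∈ c.edges) (hf : f ∈ c.edges) (hve : v ∈ e)
    (hvf : v ∈ f) : e = f := by
  by_contra hne
  exact hD.2.2 c hc e he f hf hne ⟨v, hve, hvf⟩

lemma nbr_touched (hG : IsCubic G) (hC : IsDominatingCycle G C)
    (hD : IsCompatibleCycleDecomposition G (G \ C) D) (hc : c ∈ D) {x y : V}
    (hx : used c x) (h1 : ((G \ C).neighborSet x).ncard = 1)
    (hxy : (G \ C).Adj x y) : touched c y := by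
  rcases mdeg hG hC y with hy1 | hy3
  · left
    obtain ⟨j, hj⟩ := comp_mem_range_of_used hx
    obtain ⟨u, v, huv, hcu, hcv, huu, hvv, hchar⟩ :=
      usedTwo (fun e he f hf => hD.2.2 c hc e he f hf) j
    have hxo : ∃ o, o ≠ x ∧ used c o ∧
        (G \ C).connectedComponentMk o = (G \ C).connectedComponentMk x := by
      rcases hchar x hx hj.symm with rfl | rfl
      · exact ⟨v, fun h => huv h.symm, hvv, by rw [hcv, hj]⟩
      · exact ⟨u, fun h => huv h, huu, by rw [hcu, hj]⟩
    obtain ⟨o, ho, hou, hoc⟩ := hxo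
    rcases reach_struct hG hC (ConnectedComponent.exact hoc.symm) with h | hadj | ⟨z, hz1, hz2⟩
    · exact absurd h.symm ho
    · have := eq_nbr_of_mdeg_one h1 hadj hxy
      rw [← this]
      exact hou
    · have hzy := eq_nbr_of_mdeg_one h1 hz1 hxy
      subst hzy
      exact absurd (eq_nbr_of_mdeg_one hy1 hxy.symm hz2).symm ho
  · right
    refine ⟨hy3, ?_⟩
    rw [← ConnectedComponent.connectedComponentMk_eq_of_adj hxy]
    exact comp_mem_range_of_used hx

lemma center_adj (hG : IsCubic G) (hC : IsDominatingCycle G C) {w u : V}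
    (h3 : ((G \ C).neighborSet w).ncard = 3) (hu : used c u)
    (hcomp : (G \ C).connectedComponentMk u = (G \ C).connectedComponentMk w) :
    (lift c).Adj w u := by
  have hu1 : ((G \ C).neighborSet u).ncard = 1 := mdeg_one hG hC (mem_support_of_used hC hu)
  have hadj : (G \ C).Adj w u := by
    rcases reach_struct hG hC (ConnectedComponent.exact hcomp) with h | h | ⟨z, h1, h2⟩
    · rw [h] at hu1; omega
    · exact h.symm
    · by_cases hzw : z = w
      · subst hzw; exact h1.symm
      · have hz3 : ((G \ C).neighborSet z).ncard = 3 := by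
          rcases mdeg hG hC z with hz1 | hz1
          · have := eq_nbr_of_mdeg_one hz1 h1.symm h2
            rw [this] at hu1; omega
          · exact hz1
        have := mdeg_nbr hG hC h2 hz3
        omega
  exact Or.inr ⟨hadj, Or.inr ⟨h3, by rw [← hcomp]; exact comp_mem_range_of_used hu⟩, Or.inl hu⟩

lemma used_reach (hG : IsCubic G) (hC : IsDominatingCycle G C) {u v : V}
    (hu : used c u) (hv : used c v)
    (hcomp : (G \ C).connectedComponentMk u = (G \ C).connectedComponentMk v) :
    (lift c).Reachable u v := by
  by_cases h : u = v
  · exact h ▸ Reachable.refl u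
  rcases reach_struct hG hC (ConnectedComponent.exact hcomp) with h' | hadj | ⟨z, h1, h2⟩
  · exact absurd h' h
  · exact SimpleGraph.Adj.reachable (Or.inr ⟨hadj, Or.inl hu, Or.inl hv⟩)
  · by_cases hz : z = v
    · subst hz
      exact SimpleGraph.Adj.reachable (Or.inr ⟨h1, Or.inl hu, Or.inl hv⟩)
    · have hz3 : ((G \ C).neighborSet z).ncard = 3 := by
        rcases mdeg hG hC z with hz1 | hz1
        · exact absurd (eq_nbr_of_mdeg_one hz1 h1.symm h2) h
        · exact hz1
      have htz : touched c z := Or.inr ⟨hz3, by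
        rw [← ConnectedComponent.connectedComponentMk_eq_of_adj h1]
        exact comp_mem_range_of_used hu⟩
      have a1 : (lift c).Adj u z := Or.inr ⟨h1, Or.inl hu, htz⟩
      have a2 : (lift c).Adj z v := Or.inr ⟨h2, htz, Or.inl hv⟩
      exact a1.reachable.trans a2.reachable

lemma XY_adj (i : Fin c.n) : (lift c).Adj (Xf c i) (Yf c i) :=
  Or.inl (by rw [← (Xf_spec c i).1]; exact edge_mem_edges c i)

lemma reach_base (hG : IsCubic G) (hC : IsDominatingCycle G C) (i : Fin c.n) :
    (lift c).Reachable (Xf c ⟨0, c.hn⟩) (Xf c i) := by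
  obtain ⟨m, hm⟩ := i
  induction m with
  | zero => exact Reachable.refl _
  | succ k ih =>
    have hk : k < c.n := by omega
    have h1 := ih hk
    have h2 : nxt c ⟨k, hk⟩ = ⟨k + 1, hm⟩ := by
      apply Fin.ext
      have hval : (nxt c ⟨k, hk⟩).val = (k + 1 % c.n) % c.n := rfl
      have e1 : 1 % c.n = 1 := Nat.mod_eq_of_lt (by omega)
      rw [hval, e1, Nat.mod_eq_of_lt hm]
    have h3 : (lift c).Reachable (Yf c ⟨k, hk⟩) (Xf c (nxt c ⟨k, hk⟩)) :=
      used_reach hG hC (used_iff.mpr ⟨_, Or.inr rfl⟩) (used_iff.mpr ⟨_, Or.inl rfl⟩)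
        (by rw [(Xf_spec c _).2.2, (Xf_spec c _).2.1])
    exact h1.trans ((XY_adj _).reachable.trans (h2 ▸ h3))

lemma lift_le : lift c ≤ G := by
  intro x y h
  rcases h with h | ⟨h, -, -⟩
  · obtain ⟨i, hi⟩ := h
    have hm := (c.mem i).1
    rw [hi] at hm
    exact G.mem_edgeSet.mp hm
  · exact h.1

lemma lift_deg (hG : IsCubic G) (hC : IsDominatingCycle G C)
    (hD : IsCompatibleCycleDecomposition G (G \ C) D) (hc : c ∈ D) (v : V) :
    ((lift c).neighborSet v).ncard = 0 ∨ ((lift c).neighborSet v).ncard = 2 := by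
  by_cases ht : touched c v
  · right
    by_cases hu : used c v
    · obtain ⟨i, hi⟩ := used_iff.mp hu
      obtain ⟨o, ho, hoe⟩ : ∃ o, o ≠ v ∧ c.edge i = s(v, o) := by
        rcases hi with h | h
        · exact ⟨Yf c i, by rw [h]; exact (Xf_ne_Yf c i).symm,
            by rw [h]; exact (Xf_spec c i).1⟩
        · exact ⟨Xf c i, by rw [h]; exact Xf_ne_Yf c i,
            by rw [h, (Xf_spec c i).1, Sym2.eq_swap]⟩
      have hv1 : ((G \ C).neighborSet v).ncard = 1 :=
        mdeg_one hG hC (mem_support_of_used hC hu)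
      obtain ⟨m, hm⟩ := Set.ncard_eq_one.mp hv1
      have hmadj : (G \ C).Adj v m := by
        have : m ∈ (G \ C).neighborSet v := by rw [hm]; exact Set.mem_singleton m
        exact this
      have homne : o ≠ m := by
        have hCvo : C.Adj v o := by
          have h2 := edges_subset_C hC c (edge_mem_edges c i)
          rw [hoe] at h2
          exact C.mem_edgeSet.mp h2
        intro he
        subst he
        exact hmadj.2 hCvo
      have hset : (lift c).neighborSet v = {o, m} := by
        ext w
        simp only [mem_neighborSet, Set.mem_insert_iff, Set.mem_singleton_iff]
        constructor
        · rintro (h | ⟨h, -, -⟩)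
          · left
            have hve : (v : V) ∈ c.edge i := by
              rw [hoe]; exact Sym2.mem_mk_left v o
            have he : s(v, w) = c.edge i :=
              used_unique hD hc h (edge_mem_edges c i) (Sym2.mem_mk_left v w) hve
            rw [hoe] at he
            rcases Sym2.eq_iff.mp he with ⟨-, h'⟩ | ⟨h1, -⟩
            · exact h'
            · exact absurd h1.symm ho
          · exact Or.inr (eq_nbr_of_mdeg_one hv1 h hmadj)
        · rintro (rfl | rfl)
          · exact Or.inl (by rw [← hoe]; exact edge_mem_edges c i)
          · exact Or.inr ⟨hmadj, ht, nbr_touched hG hC hD hc hu hv1 hmadj⟩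
      rw [hset]
      exact Set.ncard_pair homne
    · obtain ⟨h3, j, hj⟩ := ht.resolve_left hu
      obtain ⟨u, u', hne, hcu, hcu', huu, huu', hchar⟩ :=
        usedTwo (fun e he f hf => hD.2.2 c hc e he f hf) j
      have hset : (lift c).neighborSet v = {u, u'} := by
        ext w
        simp only [mem_neighborSet, Set.mem_insert_iff, Set.mem_singleton_iff]
        constructor
        · rintro (h | ⟨h, -, hw⟩)
          · exact absurd ⟨_, h, Sym2.mem_mk_left v w⟩ hu
          · have hw1 := mdeg_nbr hG hC h h3
            have hwu : used c w := by
              rcases hw with hw | ⟨h3', -⟩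
              · exact hw
              · omega
            have hcw : (G \ C).connectedComponentMk w = c.vtx j := by
              rw [← ConnectedComponent.connectedComponentMk_eq_of_adj h.symm] at hj
              exact hj.symm
            exact hchar w hwu hcw
        · rintro (rfl | rfl)
          · exact center_adj hG hC h3 huu (by rw [hcu, hj])
          · exact center_adj hG hC h3 huu' (by rw [hcu', hj])
      rw [hset]
      exact Set.ncard_pair hne
  · left
    have hset : (lift c).neighborSet v = ∅ := by
      ext w
      simp only [mem_neighborSet, Set.mem_empty_iff_false, iff_false]
      rintro (h | ⟨-, hv, -⟩)
      · exact ht (Or.inl ⟨_, h, Sym2.mem_mk_left v w⟩)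
      · exact ht hv
    rw [hset, Set.ncard_empty]

lemma lift_cycle (hG : IsCubic G) (hC : IsDominatingCycle G C)
    (hD : IsCompatibleCycleDecomposition G (G \ C) D) (hc : c ∈ D) :
    IsCycleSubgraph G (lift c) := by
  refine ⟨lift_le, ⟨c.edge ⟨0, c.hn⟩, ?_⟩, lift_deg hG hC hD hc, ?_⟩
  · rw [(Xf_spec c ⟨0, c.hn⟩).1]
    exact (lift c).mem_edgeSet.mpr (XY_adj ⟨0, c.hn⟩)
  · have hsupp : ∀ w ∈ (lift c).support, (lift c).Reachable w (Xf c ⟨0, c.hn⟩) := by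
      intro w hw
      obtain ⟨w', hadj⟩ := hw
      have htw : touched c w := by
        rcases hadj with h | ⟨-, h, -⟩
        · exact Or.inl ⟨_, h, Sym2.mem_mk_left w w'⟩
        · exact h
      rcases htw with hwu | ⟨h3, j, hj⟩
      · obtain ⟨i, h | h⟩ := used_iff.mp hwu
        · rw [h]; exact (reach_base hG hC i).symm
        · rw [h]
          exact ((XY_adj i).symm.reachable).trans (reach_base hG hC i).symm
      · have hadj2 : (lift c).Adj w (Xf c j) :=
          center_adj hG hC h3 (used_iff.mpr ⟨j, Or.inl rfl⟩) ((Xf_spec c j).2.1.trans hj)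
        exact hadj2.reachable.trans (reach_base hG hC j).symm
    intro u v hu hv
    exact (hsupp u hu).trans (hsupp v hv).symm

lemma lift_edge_C (hC : IsDominatingCycle G C) :
    ∀ e ∈ C.edgeSet, (e ∈ (lift c).edgeSet ↔ e ∈ c.edges) := by
  intro e
  induction e using Sym2.ind with
  | _ x y =>
    intro he
    rw [SimpleGraph.mem_edgeSet]
    constructor
    · rintro (h | ⟨h, -, -⟩)
      · exact h
      · exact absurd (C.mem_edgeSet.mp he) h.2
    · intro h
      exact Or.inl h

lemma lift_edge_M (hG : IsCubic G) (hC : IsDominatingCycle G C)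
    (hD : IsCompatibleCycleDecomposition G (G \ C) D) (hc : c ∈ D) {x y : V}
    (hadj : (G \ C).Adj x y) (h1 : ((G \ C).neighborSet x).ncard = 1) :
    s(x, y) ∈ (lift c).edgeSet ↔ used c x := by
  rw [SimpleGraph.mem_edgeSet]
  constructor
  · rintro (h | ⟨-, htx, -⟩)
    · have h2 := edges_subset_C hC c h
      exact absurd (C.mem_edgeSet.mp h2) hadj.2
    · rcases htx with h' | ⟨h3, -⟩
      · exact h'
      · omega
  · intro hx
    exact Or.inr ⟨hadj, Or.inl hx, nbr_touched hG hC hD hc hx h1 hadj⟩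

lemma count_C (hC : IsDominatingCycle G C)
    (hD : IsCompatibleCycleDecomposition G (G \ C) D) {e : Sym2 V} (he : e ∈ C.edgeSet) :
    {c' : ContractedCycle G (G \ C) | c' ∈ D ∧ e ∈ (lift c').edgeSet}.ncard = 1 := by
  have heGM : e ∈ G.edgeSet \ (G \ C).edgeSet := by
    rw [edgeSet_sdiff]
    exact ⟨edgeSet_mono (cle hC) he, fun h => h.2 he⟩
  obtain ⟨c₀, hc₀D, hc₀e⟩ := hD.1 e heGM
  have hset : {c' : ContractedCycle G (G \ C) | c' ∈ D ∧ e ∈ (lift c').edgeSet} = {c₀} := by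
    ext c'
    simp only [Set.mem_setOf_eq, Set.mem_singleton_iff]
    constructor
    · rintro ⟨hc'D, hce⟩
      have h2 : e ∈ c'.edges := (lift_edge_C hC e he).mp hce
      by_contra hne
      exact Set.disjoint_left.mp (hD.2.1 c' hc'D c₀ hc₀D hne) h2 hc₀e
    · rintro rfl
      exact ⟨hc₀D, (lift_edge_C hC e he).mpr hc₀e⟩
  rw [hset, Set.ncard_singleton]

lemma count_M (hG : IsCubic G) (hC : IsDominatingCycle G C)
    (hD : IsCompatibleCycleDecomposition G (G \ C) D) {x y : V}
    (hadj : (G \ C).Adj x y) (h1 : ((G \ C).neighborSet x).ncard = 1) :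
    {c' : ContractedCycle G (G \ C) | c' ∈ D ∧ s(x, y) ∈ (lift c').edgeSet}.ncard = 2 := by
  have hsupp : x ∈ C.support := support_of_mdeg_one hG h1
  obtain ⟨a, b, hab, hnb⟩ := Set.ncard_eq_two.mp (cdeg_two hC hsupp)
  have hCa : C.Adj x a := by
    have h : a ∈ C.neighborSet x := by rw [hnb]; exact Set.mem_insert a {b}
    exact h
  have hCb : C.Adj x b := by
    have h : b ∈ C.neighborSet x := by
      rw [hnb]; exact Set.mem_insert_of_mem a (Set.mem_singleton b)
    exact h
  have hGMa : s(x, a) ∈ G.edgeSet \ (G \ C).edgeSet := by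
    rw [edgeSet_sdiff]
    exact ⟨G.mem_edgeSet.mpr (cle hC hCa), fun h => h.2 (C.mem_edgeSet.mpr hCa)⟩
  have hGMb : s(x, b) ∈ G.edgeSet \ (G \ C).edgeSet := by
    rw [edgeSet_sdiff]
    exact ⟨G.mem_edgeSet.mpr (cle hC hCb), fun h => h.2 (C.mem_edgeSet.mpr hCb)⟩
  obtain ⟨ca, hcaD, hcae⟩ := hD.1 _ hGMa
  obtain ⟨cb, hcbD, hcbe⟩ := hD.1 _ hGMb
  have hedne : s(x, a) ≠ s(x, b) := by
    intro h
    rcases Sym2.eq_iff.mp h with ⟨-, h'⟩ | ⟨h1', h2'⟩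
    · exact hab h'
    · exact hab (h2'.trans h1')
  have hcab : ca ≠ cb := by
    rintro rfl
    exact hD.2.2 ca hcaD _ hcae _ hcbe hedne ⟨x, Sym2.mem_mk_left x a, Sym2.mem_mk_left x b⟩
  have hset : {c' : ContractedCycle G (G \ C) | c' ∈ D ∧ s(x, y) ∈ (lift c').edgeSet}
      = {ca, cb} := by
    ext c'
    simp only [Set.mem_setOf_eq, Set.mem_insert_iff, Set.mem_singleton_iff]
    constructor
    · rintro ⟨hc'D, hce⟩
      have hx : used c' x := (lift_edge_M hG hC hD hc'D hadj h1).mp hce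
      obtain ⟨f, hf, hxf⟩ := hx
      obtain ⟨w, rfl⟩ : ∃ w, s(x, w) = f := ⟨Sym2.Mem.other hxf, Sym2.other_spec hxf⟩
      have hCxw : C.Adj x w := C.mem_edgeSet.mp (edges_subset_C hC c' hf)
      have hw : w ∈ C.neighborSet x := hCxw
      rw [hnb] at hw
      rcases hw with rfl | rfl
      · left
        by_contra hne
        exact Set.disjoint_left.mp (hD.2.1 c' hc'D ca hcaD hne) hf hcae
      · right
        by_contra hne
        exact Set.disjoint_left.mp (hD.2.1 c' hc'D cb hcbD hne) hf hcbe
    · rintro (rfl | rfl)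
      · exact ⟨hcaD, (lift_edge_M hG hC hD hcaD hadj h1).mpr ⟨_, hcae, Sym2.mem_mk_left x a⟩⟩
      · exact ⟨hcbD, (lift_edge_M hG hC hD hcbD hadj h1).mpr ⟨_, hcbe, Sym2.mem_mk_left x b⟩⟩
  rw [hset]
  exact Set.ncard_pair hcab

lemma D_finite (hD : IsCompatibleCycleDecomposition G (G \ C) D) : D.Finite := by
  have hinj : Set.InjOn (fun c' : ContractedCycle G (G \ C) => c'.edges) D := by
    intro c1 h1 c2 h2 he
    by_contra hne
    have hdis := hD.2.1 c1 h1 c2 h2 hne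
    simp only at he
    rw [he] at hdis
    exact Set.disjoint_left.mp hdis (edge_mem_edges c2 ⟨0, c2.hn⟩) (edge_mem_edges c2 ⟨0, c2.hn⟩)
  exact Set.Finite.of_finite_image (Set.toFinite _) hinj

end Main
end CDC

/-- Let `C` be a dominating cycle of a cubic graph `G` and
`M = G \ E(C)` the associated perfect pseudo-matching. If `G/M` has a cycle decomposition
compatible with the transition system corresponding to `C`, then lifting it yields a family
`S₃` of cycles of `G` covering every edge of `M` twice and every edge of `C` once, so that
`S₃ ∪ {C}` is a cycle double cover of `G` containing `C`. -/
theorem cdc_containing_dominating_cycle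
    {V : Type*} [Fintype V] (G C : SimpleGraph V)
    (hG : IsCubic G) (hC : IsDominatingCycle G C)
    (D : Set (ContractedCycle G (G \ C)))
    (hD : IsCompatibleCycleDecomposition G (G \ C) D) :
    ∃ (n : ℕ) (F : Fin n → SimpleGraph V),
      (∀ i, IsCycleSubgraph G (F i)) ∧
      (∀ e ∈ (G \ C).edgeSet, {i : Fin n | e ∈ (F i).edgeSet}.ncard = 2) ∧
      (∀ e ∈ C.edgeSet, {i : Fin n | e ∈ (F i).edgeSet}.ncard = 1) ∧
      IsCycleDoubleCover G (Fin.snoc F C) := by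
  classical
  have hfin : D.Finite := CDC.D_finite hD
  haveI : Fintype ↥D := hfin.fintype
  set n := Fintype.card ↥D with hnd
  let eqv : ↥D ≃ Fin n := Fintype.equivFin ↥D
  let φ : Fin n → ContractedCycle G (G \ C) := fun i => ((eqv.symm i : ↥D) : ContractedCycle G (G \ C))
  let F : Fin n → SimpleGraph V := fun i => CDC.lift (φ i)
  have hφD : ∀ i, φ i ∈ D := fun i => (eqv.symm i).2
  have hφinj : Function.Injective φ := fun i j h => eqv.symm.injective (Subtype.ext h)
  have hrange : Set.range φ = D := by
    ext c'
    constructor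
    · rintro ⟨i, rfl⟩; exact hφD i
    · intro hc'
      exact ⟨eqv ⟨c', hc'⟩, by simp [φ]⟩
  have hcount : ∀ S : Set (ContractedCycle G (G \ C)),
      {i : Fin n | φ i ∈ S}.ncard = (S ∩ D).ncard := by
    intro S
    rw [show {i : Fin n | φ i ∈ S} = φ ⁻¹' S from rfl,
      ← Set.ncard_image_of_injective _ hφinj, Set.image_preimage_eq_inter_range, hrange]
  have htrans : ∀ e : Sym2 V, {i : Fin n | e ∈ (F i).edgeSet}.ncard
      = {c' : ContractedCycle G (G \ C) | c' ∈ D ∧ e ∈ (CDC.lift c').edgeSet}.ncard := by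
    intro e
    have hseteq : {i : Fin n | e ∈ (F i).edgeSet}
        = {i : Fin n | φ i ∈ {c' : ContractedCycle G (G \ C) | c' ∈ D ∧ e ∈ (CDC.lift c').edgeSet}} := by
      ext i
      simp only [Set.mem_setOf_eq, F]
      exact ⟨fun h => ⟨hφD i, h⟩, fun h => h.2⟩
    rw [hseteq, hcount, Set.inter_eq_self_of_subset_left (fun c' hc' => hc'.1)]
  have hMc : ∀ e ∈ (G \ C).edgeSet, {i : Fin n | e ∈ (F i).edgeSet}.ncard = 2 := by
    intro e
    induction e using Sym2.ind with
    | _ x y =>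
      intro he
      have hadj : (G \ C).Adj x y := (G \ C).mem_edgeSet.mp he
      rcases CDC.mdeg hG hC x with h1 | h3
      · rw [htrans]
        exact CDC.count_M hG hC hD hadj h1
      · have h1y := CDC.mdeg_nbr hG hC hadj h3
        rw [Sym2.eq_swap, htrans]
        exact CDC.count_M hG hC hD hadj.symm h1y
  have hCc : ∀ e ∈ C.edgeSet, {i : Fin n | e ∈ (F i).edgeSet}.ncard = 1 := by
    intro e he
    rw [htrans]
    exact CDC.count_C hC hD he
  have hcyc : ∀ i, IsCycleSubgraph G (F i) := fun i => CDC.lift_cycle hG hC hD (hφD i)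
  refine ⟨n, F, hcyc, hMc, hCc, ?_, ?_⟩
  · intro i
    refine Fin.lastCases ?_ (fun j => ?_) i
    · rw [Fin.snoc_last]; exact hC.1
    · rw [Fin.snoc_castSucc]; exact hcyc j
  · intro e heG
    by_cases heC : e ∈ C.edgeSet
    · have hsplit : {i : Fin (n+1) | e ∈ ((Fin.snoc F C : Fin (n+1) → SimpleGraph V) i).edgeSet}
          = insert (Fin.last n) (Fin.castSucc '' {i : Fin n | e ∈ (F i).edgeSet}) := by
        ext j
        refine Fin.lastCases ?_ (fun j => ?_) j
        · simp only [Set.mem_setOf_eq, Fin.snoc_last]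
          constructor
          · intro _
            exact Set.mem_insert _ _
          · intro _
            exact heC
        · simp only [Set.mem_setOf_eq, Fin.snoc_castSucc, Set.mem_insert_iff, Set.mem_image]
          constructor
          · intro h
            exact Or.inr ⟨j, h, rfl⟩
          · rintro (h | ⟨k, hk, hkj⟩)
            · exact absurd h (Fin.castSucc_lt_last j).ne
            · rwa [← Fin.castSucc_injective n hkj]
      rw [hsplit, Set.ncard_insert_of_notMem ?_ (Set.toFinite _),
        Set.ncard_image_of_injective _ (Fin.castSucc_injective n), hCc e heC]
      rintro ⟨k, -, hk⟩
      exact (Fin.castSucc_lt_last k).ne hk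
    · have heM : e ∈ (G \ C).edgeSet := by rw [edgeSet_sdiff]; exact ⟨heG, heC⟩
      have hsplit : {i : Fin (n+1) | e ∈ ((Fin.snoc F C : Fin (n+1) → SimpleGraph V) i).edgeSet}
          = Fin.castSucc '' {i : Fin n | e ∈ (F i).edgeSet} := by
        ext j
        refine Fin.lastCases ?_ (fun j => ?_) j
        · simp only [Set.mem_setOf_eq, Fin.snoc_last, Set.mem_image]
          constructor
          · intro h; exact absurd h heC
          · rintro ⟨k, -, hk⟩
            exact absurd hk (Fin.castSucc_lt_last k).ne
        · simp only [Set.mem_setOf_eq, Fin.snoc_castSucc, Set.mem_image]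
          constructor
          · intro h; exact ⟨j, h, rfl⟩
          · rintro ⟨k, hk, hkj⟩
            rwa [← Fin.castSucc_injective n hkj]
      rw [hsplit, Set.ncard_image_of_injective _ (Fin.castSucc_injective n)]
      exact hMc e heM
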